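/- Let T be a finite tree, and suppose for each n we have symmetric nonnegative weights p_n(i,j) on {1,...,n}² with sup_{i,j} p_n(i,j) ≤ ε_n² where ε_n → 0, rows bounded: ∑_j p_n(i,j) ≤ C, and row sums converging to 1 in average: (1/n)·∑_{i=1}^n |∑_{j=1}^n p_n(i,j) − 1| → 0. Then (1/n)·∑_{F : V(T) → {1,...,n} injective} ∏_{e ∈ E(T)} p_n(F(x_e), F(y_e)) → 1 as n → ∞. -/

import Mathlib

open Finset Filter
open scoped Classical

section AuxLemmas

lemma snoc_inj_iff {k n : ℕ} (b : Fin k → Fin n) (j : Fin n) :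
    Function.Injective (Fin.snoc b j : Fin (k+1) → Fin n) ↔
      Function.Injective b ∧ ∀ m, b m ≠ j := by
  constructor
  · intro h
    refine ⟨fun x y hxy => ?_, fun m hm => ?_⟩
    · have := h (a₁ := x.castSucc) (a₂ := y.castSucc) (by simpa using hxy)
      exact Fin.castSucc_injective _ this
    · have := h (a₁ := m.castSucc) (a₂ := Fin.last k) (by simpa using hm)
      exact absurd (congrArg Fin.val this) (by have := m.castSucc_lt_last; omega)
  · rintro ⟨hb, hj⟩ x y hxy
    induction x using Fin.lastCases with
    | last =>
      induction y using Fin.lastCases with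
      | last => rfl
      | cast y' =>
        rw [Fin.snoc_last, Fin.snoc_castSucc] at hxy
        exact absurd hxy.symm (hj y')
    | cast x' =>
      induction y using Fin.lastCases with
      | last =>
        rw [Fin.snoc_last, Fin.snoc_castSucc] at hxy
        exact absurd hxy (hj x')
      | cast y' =>
        rw [Fin.snoc_castSucc, Fin.snoc_castSucc] at hxy
        exact congrArg Fin.castSucc (hb hxy)


/-- sum reindex over snoc -/
lemma sum_snoc {k n : ℕ} (f : (Fin (k+1) → Fin n) → ℝ) :
    ∑ a : Fin (k+1) → Fin n, f a
      = ∑ b : Fin k → Fin n, ∑ j : Fin n, f (Fin.snoc b j) := by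
  rw [← Equiv.sum_comp (Fin.snocEquiv (fun _ => Fin n)) f, Fintype.sum_prod_type, Finset.sum_comm]
  rfl

lemma snoc_castPred {k n : ℕ} (b : Fin k → Fin n) (j : Fin n) (x : Fin (k+1)) (h : x ≠ Fin.last k) :
    (Fin.snoc b j : Fin (k+1) → Fin n) x = b (x.castPred h) := by
  have h2 := Fin.snoc_castSucc (α := fun _ => Fin n) (p := b) (x := j) (i := x.castPred h)
  rw [Fin.castSucc_castPred] at h2
  exact h2

lemma rooted_bound (k : ℕ) : ∀ (π : Fin k → Fin k), (∀ m : Fin k, (m:ℕ) ≠ 0 → π m < m) →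
    ∀ (n : ℕ) (q : Fin n → Fin n → ℝ), (∀ i j, q i j = q j i) → (∀ i j, 0 ≤ q i j) →
    ∀ (C : ℝ), 0 ≤ C → (∀ i, ∑ j, q i j ≤ C) →
    ∀ (r : Fin k) (i : Fin n),
      ∑ a : Fin k → Fin n,
        (if a r = i then ∏ m ∈ univ.filter (fun m : Fin k => (m:ℕ) ≠ 0), q (a m) (a (π m)) else 0)
        ≤ C ^ (k - 1) := by
  induction k with
  | zero => exact fun _ _ _ _ _ _ _ _ _ r => r.elim0
  | succ k IH =>
    intro π hπ n q hsym h0 C hC hrow r i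
    rcases Nat.eq_zero_or_pos k with hk | hk
    · subst hk
      have hfil : (univ.filter (fun m : Fin 1 => (m:ℕ) ≠ 0)) = ∅ := by decide
      simp only [hfil, Finset.prod_empty]
      rw [← Equiv.sum_comp (Equiv.funUnique (Fin 1) (Fin n)).symm]
      have hv : ∀ x : Fin n, ((Equiv.funUnique (Fin 1) (Fin n)).symm x) r = x := fun x => rfl
      simp only [hv]
      simp
    · -- k ≥ 1
      have hL0 : ((Fin.last k : Fin (k+1)) : ℕ) ≠ 0 := by simp; omega
      have hπL := hπ _ hL0
      have hπLne : π (Fin.last k) ≠ Fin.last k := Fin.ne_of_lt hπL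
      set pl : Fin k := (π (Fin.last k)).castPred hπLne with hpl
      set π' : Fin k → Fin k := fun m =>
        if h : π m.castSucc = Fin.last k then ⟨0, hk⟩ else (π m.castSucc).castPred h with hπ'def
      have hπ' : ∀ m : Fin k, (m:ℕ) ≠ 0 → π' m < m := by
        intro m hm
        have hcs0 : ((m.castSucc : Fin (k+1)) : ℕ) ≠ 0 := by simpa using hm
        have hlt := hπ _ hcs0
        have hne : π m.castSucc ≠ Fin.last k := by
          intro h; rw [h] at hlt
          have h1 := Fin.lt_def.mp hlt
          have h2 := Fin.lt_def.mp (m.castSucc_lt_last)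
          simp at h1 h2; omega
        rw [hπ'def]; simp only [dif_neg hne]
        rw [Fin.lt_def] at hlt ⊢
        simpa using hlt
      have hprod : ∀ (b : Fin k → Fin n) (j : Fin n),
          (∏ m ∈ univ.filter (fun m : Fin (k+1) => (m:ℕ) ≠ 0),
            q ((Fin.snoc b j : Fin (k+1) → Fin n) m) ((Fin.snoc b j : Fin (k+1) → Fin n) (π m)))
          = q j (b pl) * ∏ m ∈ univ.filter (fun m : Fin k => (m:ℕ) ≠ 0), q (b m) (b (π' m)) := by
        intro b j
        rw [Finset.prod_filter, Finset.prod_filter, Fin.prod_univ_castSucc]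
        have hlast : (if ((Fin.last k : Fin (k+1)) : ℕ) ≠ 0 then
            q ((Fin.snoc b j : Fin (k+1) → Fin n) (Fin.last k)) ((Fin.snoc b j : Fin (k+1) → Fin n) (π (Fin.last k))) else 1) = q j (b pl) := by
          rw [if_pos hL0]
          congr 1
          · exact Fin.snoc_last _ _
          · rw [hpl]; exact snoc_castPred b j _ hπLne
        rw [hlast, mul_comm]
        congr 1
        apply Finset.prod_congr rfl
        intro m _
        by_cases hm : (m:ℕ) = 0
        · rw [if_neg (by simpa using hm), if_neg (by simpa using hm)]
        · have hcs0 : ((m.castSucc : Fin (k+1)) : ℕ) ≠ 0 := by simpa using hm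
          rw [if_pos hcs0, if_pos hm]
          have hne : π m.castSucc ≠ Fin.last k := by
            have hlt := hπ _ hcs0
            intro h; rw [h] at hlt
            have h1 := Fin.lt_def.mp hlt
            have h2 := Fin.lt_def.mp (m.castSucc_lt_last)
            simp at h1 h2; omega
          congr 1
          · exact Fin.snoc_castSucc _ _ _
          · rw [hπ'def]; simp only [dif_neg hne]
            exact snoc_castPred b j _ hne
      rw [sum_snoc]
      have hCk : C ^ (k - 1) * C ≤ C ^ k := by
        rw [← pow_succ]
        have h1 : k - 1 + 1 = k := by omega
        rw [h1]
      have hexp : (k + 1 - 1) = k := by omega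
      rw [hexp]
      rcases Fin.eq_castSucc_or_eq_last r with ⟨r', rfl⟩ | rfl
      · -- r = castSucc r'
        calc ∑ b : Fin k → Fin n, ∑ j : Fin n,
              (if (Fin.snoc b j : Fin (k+1) → Fin n) r'.castSucc = i then
                ∏ m ∈ univ.filter (fun m : Fin (k+1) => (m:ℕ) ≠ 0),
                  q ((Fin.snoc b j : Fin (k+1) → Fin n) m) ((Fin.snoc b j : Fin (k+1) → Fin n) (π m)) else 0)
            = ∑ b : Fin k → Fin n,
              (if b r' = i then (∑ j, q j (b pl)) *
                 ∏ m ∈ univ.filter (fun m : Fin k => (m:ℕ) ≠ 0), q (b m) (b (π' m)) else 0) := by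
              apply Finset.sum_congr rfl; intro b _
              simp only [Fin.snoc_castSucc, hprod]
              by_cases hb : b r' = i
              · rw [if_pos hb, Finset.sum_mul]
                apply Finset.sum_congr rfl; intro j _; rw [if_pos hb]
              · simp [hb]
          _ ≤ ∑ b : Fin k → Fin n,
              (if b r' = i then C *
                 ∏ m ∈ univ.filter (fun m : Fin k => (m:ℕ) ≠ 0), q (b m) (b (π' m)) else 0) := by
              apply Finset.sum_le_sum; intro b _
              by_cases hb : b r' = i
              · rw [if_pos hb, if_pos hb]
                apply mul_le_mul_of_nonneg_right _ (Finset.prod_nonneg (fun m _ => h0 _ _))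
                calc ∑ j, q j (b pl) = ∑ j, q (b pl) j :=
                      Finset.sum_congr rfl (fun j _ => hsym _ _)
                  _ ≤ C := hrow _
              · simp [hb]
          _ = C * ∑ b : Fin k → Fin n,
              (if b r' = i then
                 ∏ m ∈ univ.filter (fun m : Fin k => (m:ℕ) ≠ 0), q (b m) (b (π' m)) else 0) := by
              rw [Finset.mul_sum]
              apply Finset.sum_congr rfl; intro b _
              by_cases hb : b r' = i <;> simp [hb]
          _ ≤ C * C ^ (k - 1) :=
              mul_le_mul_of_nonneg_left (IH π' hπ' n q hsym h0 C hC hrow r' i) hC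
          _ ≤ C ^ k := by rw [mul_comm]; exact hCk
      · -- r = last
        calc ∑ b : Fin k → Fin n, ∑ j : Fin n,
              (if (Fin.snoc b j : Fin (k+1) → Fin n) (Fin.last k) = i then
                ∏ m ∈ univ.filter (fun m : Fin (k+1) => (m:ℕ) ≠ 0),
                  q ((Fin.snoc b j : Fin (k+1) → Fin n) m) ((Fin.snoc b j : Fin (k+1) → Fin n) (π m)) else 0)
            = ∑ b : Fin k → Fin n, q i (b pl) *
                 ∏ m ∈ univ.filter (fun m : Fin k => (m:ℕ) ≠ 0), q (b m) (b (π' m)) := by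
              apply Finset.sum_congr rfl; intro b _
              simp only [Fin.snoc_last, hprod]
              rw [Finset.sum_ite_eq' univ i
                (fun j => q j (b pl) * ∏ m ∈ univ.filter (fun m : Fin k => (m:ℕ) ≠ 0), q (b m) (b (π' m)))]
              simp
          _ = ∑ b : Fin k → Fin n, ∑ i' : Fin n,
                (if b pl = i' then q i i' *
                  ∏ m ∈ univ.filter (fun m : Fin k => (m:ℕ) ≠ 0), q (b m) (b (π' m)) else 0) := by
              apply Finset.sum_congr rfl; intro b _
              rw [Finset.sum_ite_eq univ (b pl)]
              simp
          _ = ∑ i' : Fin n, q i i' * ∑ b : Fin k → Fin n,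
                (if b pl = i' then
                  ∏ m ∈ univ.filter (fun m : Fin k => (m:ℕ) ≠ 0), q (b m) (b (π' m)) else 0) := by
              rw [Finset.sum_comm]
              apply Finset.sum_congr rfl; intro i' _
              rw [Finset.mul_sum]
              apply Finset.sum_congr rfl; intro b _
              by_cases hb : b pl = i' <;> simp [hb]
          _ ≤ ∑ i' : Fin n, q i i' * C ^ (k-1) :=
              Finset.sum_le_sum (fun i' _ =>
                mul_le_mul_of_nonneg_left (IH π' hπ' n q hsym h0 C hC hrow pl i') (h0 _ _))
          _ = (∑ i', q i i') * C ^ (k-1) := (Finset.sum_mul _ _ _).symm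
          _ ≤ C * C ^ (k-1) := mul_le_mul_of_nonneg_right (hrow i) (pow_nonneg hC _)
          _ ≤ C ^ k := by rw [mul_comm]; exact hCk


lemma fiber_bound (k : ℕ) (π : Fin k → Fin k) (hπ : ∀ m : Fin k, (m:ℕ) ≠ 0 → π m < m)
    (n : ℕ) (q : Fin n → Fin n → ℝ) (hsym : ∀ i j, q i j = q j i) (h0 : ∀ i j, 0 ≤ q i j)
    (C : ℝ) (hC : 0 ≤ C) (hrow : ∀ i, ∑ j, q i j ≤ C)
    (r : Fin k) (g : Fin n → ℝ) (hg : ∀ i, 0 ≤ g i) :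
    ∑ a : Fin k → Fin n,
        (∏ m ∈ univ.filter (fun m : Fin k => (m:ℕ) ≠ 0), q (a m) (a (π m))) * g (a r)
      ≤ (∑ i, g i) * C ^ (k - 1) := by
  calc ∑ a : Fin k → Fin n,
        (∏ m ∈ univ.filter (fun m : Fin k => (m:ℕ) ≠ 0), q (a m) (a (π m))) * g (a r)
      = ∑ a : Fin k → Fin n, ∑ i : Fin n,
          (if a r = i then
            (∏ m ∈ univ.filter (fun m : Fin k => (m:ℕ) ≠ 0), q (a m) (a (π m))) * g i else 0) := by
        apply Finset.sum_congr rfl; intro a _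
        rw [Finset.sum_ite_eq univ (a r)]
        simp
    _ = ∑ i : Fin n, g i * ∑ a : Fin k → Fin n,
          (if a r = i then
            (∏ m ∈ univ.filter (fun m : Fin k => (m:ℕ) ≠ 0), q (a m) (a (π m))) else 0) := by
        rw [Finset.sum_comm]
        apply Finset.sum_congr rfl; intro i _
        rw [Finset.mul_sum]
        apply Finset.sum_congr rfl; intro a _
        by_cases hb : a r = i <;> simp [hb, mul_comm]
    _ ≤ ∑ i : Fin n, g i * C ^ (k - 1) :=
        Finset.sum_le_sum (fun i _ =>
          mul_le_mul_of_nonneg_left (rooted_bound k π hπ n q hsym h0 C hC hrow r i) (hg i))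
    _ = (∑ i, g i) * C ^ (k - 1) := (Finset.sum_mul _ _ _).symm


lemma key_bound (k : ℕ) : k ≠ 0 → ∀ (π : Fin k → Fin k), (∀ m : Fin k, (m:ℕ) ≠ 0 → π m < m) →
    ∀ (n : ℕ) (q : Fin n → Fin n → ℝ), (∀ i j, q i j = q j i) → (∀ i j, 0 ≤ q i j) →
    ∀ (E : ℝ), 0 ≤ E → (∀ i j, q i j ≤ E) →
    ∀ (C : ℝ), 1 ≤ C → (∀ i, ∑ j, q i j ≤ C) →
    |(∑ a : Fin k → Fin n, if Function.Injective a then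
        ∏ m ∈ univ.filter (fun m : Fin k => (m:ℕ) ≠ 0), q (a m) (a (π m)) else 0) - (n:ℝ)|
      ≤ k * C ^ k * ((∑ i, |(∑ j, q i j) - 1|) + n * k * E) := by
  induction k with
  | zero => exact fun h => absurd rfl h
  | succ k IH =>
    intro _ π hπ n q hsym h0 E hE hqE C hC1 hrow
    have hC : (0:ℝ) ≤ C := le_trans zero_le_one hC1
    have hS : (0:ℝ) ≤ ∑ i, |(∑ j, q i j) - 1| := Finset.sum_nonneg (fun i _ => abs_nonneg _)
    rcases Nat.eq_zero_or_pos k with hk | hk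
    · subst hk
      have hfil : (univ.filter (fun m : Fin 1 => (m:ℕ) ≠ 0)) = ∅ := by decide
      have hinj : ∀ a : Fin 1 → Fin n, Function.Injective a :=
        fun a => Function.injective_of_subsingleton a
      have hA : (∑ a : Fin 1 → Fin n, if Function.Injective a then
          ∏ m ∈ univ.filter (fun m : Fin 1 => (m:ℕ) ≠ 0), q (a m) (a (π m)) else 0) = (n:ℝ) := by
        rw [Finset.sum_congr rfl (fun a _ => by rw [if_pos (hinj a), hfil, Finset.prod_empty])]
        rw [Finset.sum_const, Finset.card_univ]
        simp [Fintype.card_fun]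
      rw [hA, sub_self, abs_zero]
      positivity
    · -- setup π'
      have hL0 : ((Fin.last k : Fin (k+1)) : ℕ) ≠ 0 := by simp; omega
      have hπL := hπ _ hL0
      have hπLne : π (Fin.last k) ≠ Fin.last k := Fin.ne_of_lt hπL
      set pl : Fin k := (π (Fin.last k)).castPred hπLne with hpl
      set π' : Fin k → Fin k := fun m =>
        if h : π m.castSucc = Fin.last k then ⟨0, hk⟩ else (π m.castSucc).castPred h with hπ'def
      have hπ' : ∀ m : Fin k, (m:ℕ) ≠ 0 → π' m < m := by
        intro m hm
        have hcs0 : ((m.castSucc : Fin (k+1)) : ℕ) ≠ 0 := by simpa using hm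
        have hlt := hπ _ hcs0
        have hne : π m.castSucc ≠ Fin.last k := by
          intro h; rw [h] at hlt
          have h1 := Fin.lt_def.mp hlt
          have h2 := Fin.lt_def.mp (m.castSucc_lt_last)
          simp at h1 h2; omega
        rw [hπ'def]; simp only [dif_neg hne]
        rw [Fin.lt_def] at hlt ⊢
        simpa using hlt
      have hprod : ∀ (b : Fin k → Fin n) (j : Fin n),
          (∏ m ∈ univ.filter (fun m : Fin (k+1) => (m:ℕ) ≠ 0),
            q ((Fin.snoc b j : Fin (k+1) → Fin n) m) ((Fin.snoc b j : Fin (k+1) → Fin n) (π m)))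
          = q j (b pl) * ∏ m ∈ univ.filter (fun m : Fin k => (m:ℕ) ≠ 0), q (b m) (b (π' m)) := by
        intro b j
        rw [Finset.prod_filter, Finset.prod_filter, Fin.prod_univ_castSucc]
        have hlast : (if ((Fin.last k : Fin (k+1)) : ℕ) ≠ 0 then
            q ((Fin.snoc b j : Fin (k+1) → Fin n) (Fin.last k))
              ((Fin.snoc b j : Fin (k+1) → Fin n) (π (Fin.last k))) else 1) = q j (b pl) := by
          rw [if_pos hL0]
          congr 1
          · exact Fin.snoc_last _ _
          · rw [hpl]; exact snoc_castPred b j _ hπLne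
        rw [hlast, mul_comm]
        congr 1
        apply Finset.prod_congr rfl
        intro m _
        by_cases hm : (m:ℕ) = 0
        · rw [if_neg (by simpa using hm), if_neg (by simpa using hm)]
        · have hcs0 : ((m.castSucc : Fin (k+1)) : ℕ) ≠ 0 := by simpa using hm
          rw [if_pos hcs0, if_pos hm]
          have hne : π m.castSucc ≠ Fin.last k := by
            have hlt := hπ _ hcs0
            intro h; rw [h] at hlt
            have h1 := Fin.lt_def.mp hlt
            have h2 := Fin.lt_def.mp (m.castSucc_lt_last)
            simp at h1 h2; omega
          congr 1
          · exact Fin.snoc_castSucc _ _ _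
          · rw [hπ'def]; simp only [dif_neg hne]
            exact snoc_castPred b j _ hne
      -- abbreviations
      set P' : (Fin k → Fin n) → ℝ :=
        fun b => ∏ m ∈ univ.filter (fun m : Fin k => (m:ℕ) ≠ 0), q (b m) (b (π' m)) with hP'
      have hP'nn : ∀ b, 0 ≤ P' b := fun b => Finset.prod_nonneg (fun m _ => h0 _ _)
      set R : Fin n → ℝ := fun x => ∑ j, q j x with hR
      have hRrow : ∀ x, R x = ∑ j, q x j :=
        fun x => Finset.sum_congr rfl (fun j _ => hsym _ _)
      set T : (Fin k → Fin n) → ℝ :=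
        fun b => ∑ j, if j ∈ Finset.image b Finset.univ then q j (b pl) else 0 with hT
      have hT0 : ∀ b, 0 ≤ T b :=
        fun b => Finset.sum_nonneg (fun j _ => by by_cases h : j ∈ Finset.image b Finset.univ <;>
          simp [h, h0])
      have hTk : ∀ b, T b ≤ k * E := by
        intro b
        calc T b ≤ ∑ j, if j ∈ Finset.image b Finset.univ then E else 0 := by
              apply Finset.sum_le_sum; intro j _
              by_cases h : j ∈ Finset.image b Finset.univ <;> simp [h, hqE, h0]
          _ = ∑ j ∈ Finset.univ ∩ Finset.image b Finset.univ, E := by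
              rw [Finset.sum_ite_mem]
          _ = (Finset.univ ∩ Finset.image b Finset.univ).card * E := by
              rw [Finset.sum_const, nsmul_eq_mul]
          _ ≤ k * E := by
              apply mul_le_mul_of_nonneg_right _ hE
              have h1 : (Finset.univ ∩ Finset.image b Finset.univ).card ≤ k := by
                calc (Finset.univ ∩ Finset.image b Finset.univ).card
                    ≤ (Finset.image b Finset.univ).card := Finset.card_le_card inter_subset_right
                  _ ≤ (Finset.univ : Finset (Fin k)).card := Finset.card_image_le
                  _ = k := by simp
              exact_mod_cast Nat.cast_le.mpr h1
      -- Step 1: rewrite A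
      have hA : (∑ a : Fin (k+1) → Fin n, if Function.Injective a then
            ∏ m ∈ univ.filter (fun m : Fin (k+1) => (m:ℕ) ≠ 0), q (a m) (a (π m)) else 0)
          = ∑ b : Fin k → Fin n, if Function.Injective b then (R (b pl) - T b) * P' b else 0 := by
        rw [sum_snoc]
        apply Finset.sum_congr rfl; intro b _
        calc ∑ j : Fin n, (if Function.Injective (Fin.snoc b j : Fin (k+1) → Fin n) then
              ∏ m ∈ univ.filter (fun m : Fin (k+1) => (m:ℕ) ≠ 0),
                q ((Fin.snoc b j : Fin (k+1) → Fin n) m)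
                  ((Fin.snoc b j : Fin (k+1) → Fin n) (π m)) else 0)
            = ∑ j : Fin n, (if Function.Injective b then
                (if j ∉ Finset.image b Finset.univ then q j (b pl) else 0) * P' b else 0) := by
              apply Finset.sum_congr rfl; intro j _
              rw [hprod]
              by_cases hbI : Function.Injective b
              · by_cases hjb : j ∈ Finset.image b Finset.univ
                · rw [if_neg, if_pos hbI, if_neg (by simpa using hjb), zero_mul]
                  rw [snoc_inj_iff]
                  rintro ⟨-, hall⟩
                  obtain ⟨m, -, hm⟩ := Finset.mem_image.mp hjb
                  exact hall m hm
                · rw [if_pos, if_pos hbI, if_pos (by simpa using hjb)]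
                  rw [snoc_inj_iff]
                  exact ⟨hbI, fun m hm => hjb (Finset.mem_image.mpr ⟨m, Finset.mem_univ m, hm⟩)⟩
              · rw [if_neg, if_neg hbI]
                rw [snoc_inj_iff]
                rintro ⟨hb, -⟩
                exact hbI hb
          _ = if Function.Injective b then (R (b pl) - T b) * P' b else 0 := by
              by_cases hbI : Function.Injective b
              · simp only [if_pos hbI]
                rw [← Finset.sum_mul]
                congr 1
                have hsplit : ∀ j : Fin n,
                    (if j ∉ Finset.image b Finset.univ then q j (b pl) else 0)
                      = q j (b pl) - (if j ∈ Finset.image b Finset.univ then q j (b pl) else 0) := by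
                  intro j
                  by_cases h : j ∈ Finset.image b Finset.univ <;> simp [h]
                rw [Finset.sum_congr rfl (fun j _ => hsplit j), Finset.sum_sub_distrib]
              · simp only [if_neg hbI, Finset.sum_const_zero]
      rw [hA]
      -- previous level sum
      set Aprev : ℝ := ∑ b : Fin k → Fin n, if Function.Injective b then P' b else 0 with hAprevdef
      have hIH := IH (by omega) π' hπ' n q hsym h0 E hE hqE C hC1 hrow
      rw [← hAprevdef] at hIH
      -- difference bound
      have hdiff : |(∑ b : Fin k → Fin n, if Function.Injective b then (R (b pl) - T b) * P' b else 0)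
          - Aprev| ≤ ((∑ i, |(∑ j, q i j) - 1|) + n * k * E) * C ^ (k - 1) := by
        rw [hAprevdef, ← Finset.sum_sub_distrib]
        calc |∑ b : Fin k → Fin n, ((if Function.Injective b then (R (b pl) - T b) * P' b else 0)
              - (if Function.Injective b then P' b else 0))|
            ≤ ∑ b : Fin k → Fin n, |(if Function.Injective b then (R (b pl) - T b) * P' b else 0)
              - (if Function.Injective b then P' b else 0)| := Finset.abs_sum_le_sum_abs _ _
          _ ≤ ∑ b : Fin k → Fin n, P' b * (|R (b pl) - 1| + k * E) := by
              apply Finset.sum_le_sum; intro b _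
              by_cases hbI : Function.Injective b
              · rw [if_pos hbI, if_pos hbI, ← sub_one_mul, abs_mul, abs_of_nonneg (hP'nn b),
                  mul_comm]
                apply mul_le_mul_of_nonneg_left _ (hP'nn b)
                have h1 : R (b pl) - T b - 1 = (R (b pl) - 1) - T b := by ring
                rw [h1]
                calc |(R (b pl) - 1) - T b| ≤ |R (b pl) - 1| + |T b| := abs_sub _ _
                  _ ≤ |R (b pl) - 1| + k * E := by
                      rw [abs_of_nonneg (hT0 b)]
                      exact add_le_add (le_refl _) (hTk b)
              · rw [if_neg hbI, if_neg hbI, sub_zero, abs_zero]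
                apply mul_nonneg (hP'nn b)
                have := abs_nonneg (R (b pl) - 1)
                have hkE : (0:ℝ) ≤ k * E := by positivity
                linarith
          _ ≤ (∑ x : Fin n, (|R x - 1| + k * E)) * C ^ (k - 1) := by
              have hg : ∀ x : Fin n, (0:ℝ) ≤ |R x - 1| + k * E := by
                intro x; positivity
              have hfb := fiber_bound k π' hπ' n q hsym h0 C hC hrow pl
                (fun x => |R x - 1| + (k:ℝ) * E) hg
              simpa [hP'] using hfb
          _ = ((∑ i, |(∑ j, q i j) - 1|) + n * k * E) * C ^ (k - 1) := by
              congr 1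
              rw [Finset.sum_add_distrib, Finset.sum_const, Finset.card_univ, Fintype.card_fin,
                nsmul_eq_mul]
              congr 1
              · apply Finset.sum_congr rfl; intro x _
                rw [hRrow]
              · ring
      -- combine
      have htri : |(∑ b : Fin k → Fin n, if Function.Injective b then (R (b pl) - T b) * P' b else 0)
          - (n:ℝ)| ≤ ((∑ i, |(∑ j, q i j) - 1|) + n * k * E) * C ^ (k - 1)
            + k * C ^ k * ((∑ i, |(∑ j, q i j) - 1|) + n * k * E) := by
        calc |(∑ b : Fin k → Fin n, if Function.Injective b then (R (b pl) - T b) * P' b else 0)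
              - (n:ℝ)|
            ≤ |(∑ b : Fin k → Fin n, if Function.Injective b then (R (b pl) - T b) * P' b else 0)
              - Aprev| + |Aprev - (n:ℝ)| := abs_sub_le _ _ _
          _ ≤ _ := add_le_add hdiff hIH
      refine le_trans htri ?_
      -- numeric
      set S := (∑ i, |(∑ j, q i j) - 1|) with hSdef
      have hn0 : (0:ℝ) ≤ n := Nat.cast_nonneg n
      have hk0 : (0:ℝ) ≤ k := Nat.cast_nonneg k
      have haa : S + (n:ℝ) * k * E ≤ S + n * (k+1) * E := by nlinarith
      have ha0 : (0:ℝ) ≤ S + (n:ℝ) * k * E := by positivity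
      have hpow1 : C ^ (k - 1) ≤ C ^ (k + 1) := pow_le_pow_right₀ hC1 (by omega)
      have hpow2 : C ^ k ≤ C ^ (k + 1) := pow_le_pow_right₀ hC1 (by omega)
      have hpowpos : (0:ℝ) ≤ C ^ (k+1) := by positivity
      push_cast
      calc (S + (n:ℝ) * k * E) * C ^ (k - 1) + k * C ^ k * (S + n * k * E)
          ≤ (S + (n:ℝ) * (k+1) * E) * C ^ (k+1) + k * C ^ (k+1) * (S + n * (k+1) * E) := by
            apply add_le_add
            · apply mul_le_mul haa hpow1 (by positivity) (by positivity)
            · apply mul_le_mul (mul_le_mul_of_nonneg_left hpow2 hk0)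
                (by nlinarith) (by positivity) (by positivity)
        _ = ((k:ℝ)+1) * C ^ (k+1) * (S + n * ((k:ℝ)+1) * E) := by ring


namespace TreeAuxTree
variable {V : Type*} {G : SimpleGraph V}

/-- Vertices on a dist-realizing walk from `r` have smaller-or-equal distance;
strictly smaller unless equal to the endpoint. -/
lemma support_dist_lt {r v x : V} (P : G.Walk r v) (hlen : P.length = G.dist r v)
    (hx : x ∈ P.support) : x = v ∨ G.dist r x < G.dist r v := by
  by_cases hxv : x = v
  · exact Or.inl hxv
  right
  have hsplit := P.take_spec hx
  have hlen2 : (P.takeUntil x hx).length + (P.dropUntil x hx).length = G.dist r v := by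
    rw [← hlen, ← SimpleGraph.Walk.length_append, hsplit]
  have hd1 : G.dist r x ≤ (P.takeUntil x hx).length := SimpleGraph.dist_le _
  have hd2 : (P.dropUntil x hx).length ≠ 0 := by
    intro h0
    have hnil : (P.dropUntil x hx).Nil := SimpleGraph.Walk.nil_iff_length_eq.mpr h0
    exact hxv hnil.eq
  omega

lemma adj_dist_le (hc : G.Connected) {r a b : V} (hab : G.Adj a b) :
    G.dist r b ≤ G.dist r a + 1 := by
  have h1 : G.dist a b = 1 := SimpleGraph.dist_eq_one_iff_adj.mpr hab
  have := hc.dist_triangle (u := r) (v := a) (w := b)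
  omega

lemma adj_dist_ne (hT : G.IsTree) {r a b : V} (hab : G.Adj a b) :
    G.dist r a ≠ G.dist r b := by
  intro heq
  have hc := hT.isConnected
  obtain ⟨Pa, hPa, hPalen⟩ := hc.exists_path_of_dist r a
  obtain ⟨Pb, hPb, hPblen⟩ := hc.exists_path_of_dist r b
  have hb_not : b ∉ Pa.support := by
    intro hmem
    rcases support_dist_lt Pa hPalen hmem with h | h
    · exact hab.ne' h
    · omega
  have hQpath : (Pa.concat hab).IsPath := by
    rw [← SimpleGraph.Walk.isPath_reverse_iff, SimpleGraph.Walk.reverse_concat,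
      SimpleGraph.Walk.cons_isPath_iff]
    refine ⟨hPa.reverse, ?_⟩
    rw [SimpleGraph.Walk.support_reverse, List.mem_reverse]
    exact hb_not
  have huniq := hT.existsUnique_path r b
  have heq2 : Pa.concat hab = Pb := huniq.unique hQpath hPb
  have hlen : (Pa.concat hab).length = Pa.length + 1 := SimpleGraph.Walk.length_concat _ _
  rw [heq2, hPblen] at hlen
  omega

/-- each non-root vertex has a unique parent -/
lemma parent_existsUnique (hT : G.IsTree) {r v : V} (hv : v ≠ r) :
    ∃! a, G.Adj v a ∧ G.dist r a + 1 = G.dist r v := by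
  have hc := hT.isConnected
  have hdpos : 0 < G.dist r v := hc.pos_dist_of_ne (Ne.symm hv)
  have hex : ∃ a, G.Adj v a ∧ G.dist r a + 1 = G.dist r v := by
    obtain ⟨Pv, hPv, hPvlen⟩ := hc.exists_path_of_dist r v
    have hnn : ¬ Pv.reverse.Nil := by
      apply SimpleGraph.Walk.not_nil_of_ne
      exact hv
    obtain ⟨a, hadj, q, hq⟩ := SimpleGraph.Walk.not_nil_iff.mp hnn
    refine ⟨a, hadj, ?_⟩
    have hlenq : q.length + 1 = G.dist r v := by
      have := congrArg SimpleGraph.Walk.length hq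
      rw [SimpleGraph.Walk.length_reverse] at this
      simp [SimpleGraph.Walk.length_cons] at this
      omega
    have h1 : G.dist r a ≤ q.length := by
      have := SimpleGraph.dist_le q.reverse
      rw [SimpleGraph.Walk.length_reverse] at this
      exact this
    have h2 : G.dist r v ≤ G.dist r a + 1 := adj_dist_le hc hadj.symm
    omega
  have huniq2 : ∀ a a', (G.Adj v a ∧ G.dist r a + 1 = G.dist r v) →
      (G.Adj v a' ∧ G.dist r a' + 1 = G.dist r v) → a = a' := by
    rintro a a' ⟨hA, hda⟩ ⟨hA', hda'⟩
    obtain ⟨Pa, hPa, hPalen⟩ := hc.exists_path_of_dist r a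
    obtain ⟨Pa', hPa', hPalen'⟩ := hc.exists_path_of_dist r a'
    have hv_not : v ∉ Pa.support := by
      intro hmem
      rcases support_dist_lt Pa hPalen hmem with h | h
      · exact hA.ne h
      · omega
    have hv_not' : v ∉ Pa'.support := by
      intro hmem
      rcases support_dist_lt Pa' hPalen' hmem with h | h
      · exact hA'.ne h
      · omega
    have hQpath : (Pa.concat hA.symm).IsPath := by
      rw [← SimpleGraph.Walk.isPath_reverse_iff, SimpleGraph.Walk.reverse_concat,
        SimpleGraph.Walk.cons_isPath_iff]
      refine ⟨hPa.reverse, ?_⟩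
      rw [SimpleGraph.Walk.support_reverse, List.mem_reverse]
      exact hv_not
    have hQpath' : (Pa'.concat hA'.symm).IsPath := by
      rw [← SimpleGraph.Walk.isPath_reverse_iff, SimpleGraph.Walk.reverse_concat,
        SimpleGraph.Walk.cons_isPath_iff]
      refine ⟨hPa'.reverse, ?_⟩
      rw [SimpleGraph.Walk.support_reverse, List.mem_reverse]
      exact hv_not'
    have heqQ : Pa.concat hA.symm = Pa'.concat hA'.symm :=
      (hT.existsUnique_path r v).unique hQpath hQpath'
    have h1 : (Pa.concat hA.symm).reverse.getVert 1 = a := by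
      rw [SimpleGraph.Walk.reverse_concat]
      simp [SimpleGraph.Walk.getVert_cons]
    have h2 : (Pa'.concat hA'.symm).reverse.getVert 1 = a' := by
      rw [SimpleGraph.Walk.reverse_concat]
      simp [SimpleGraph.Walk.getVert_cons]
    rw [← h1, ← h2, heqQ]
  obtain ⟨a, ha⟩ := hex
  exact ⟨a, ha, fun a' ha' => huniq2 a' a ha' ha⟩

lemma tree_order {V : Type*} [Fintype V] (G : SimpleGraph V) (hT : G.IsTree) :
    ∃ (ord : Fin (Fintype.card V) ≃ V) (π : Fin (Fintype.card V) → Fin (Fintype.card V)),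
      (∀ m : Fin (Fintype.card V), (m:ℕ) ≠ 0 → π m < m) ∧
      (∀ m : Fin (Fintype.card V), (m:ℕ) ≠ 0 → G.Adj (ord m) (ord (π m))) ∧
      (∀ e ∈ G.edgeFinset, ∃ m : Fin (Fintype.card V), (m:ℕ) ≠ 0 ∧ s(ord m, ord (π m)) = e) ∧
      (∀ m m' : Fin (Fintype.card V), (m:ℕ) ≠ 0 → (m':ℕ) ≠ 0 →
        s(ord m, ord (π m)) = s(ord m', ord (π m')) → m = m') := by
  classical
  have hc := hT.isConnected
  have : Nonempty V := hc.nonempty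
  set k := Fintype.card V with hkdef
  have hk : 0 < k := Fintype.card_pos
  obtain ⟨r⟩ := ‹Nonempty V›
  set f0 : Fin k ≃ V := (Fintype.equivFin V).symm with hf0
  set σ : Equiv.Perm (Fin k) := Tuple.sort (fun m => G.dist r (f0 m)) with hσ
  set ord : Fin k ≃ V := σ.trans f0 with hord
  have hmono : Monotone (fun m => G.dist r (ord m)) := Tuple.monotone_sort (fun m => G.dist r (f0 m))
  -- ord 0 = r
  have hord0 : ord ⟨0, hk⟩ = r := by
    have h1 : G.dist r (ord ⟨0, hk⟩) ≤ G.dist r (ord (ord.symm r)) :=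
      hmono (by exact Fin.mk_le_of_le_val (Nat.zero_le _))
    rw [Equiv.apply_symm_apply] at h1
    rw [SimpleGraph.dist_self] at h1
    exact ((hc.dist_eq_zero_iff).mp (Nat.le_zero.mp h1)).symm
  have hne_r : ∀ m : Fin k, (m:ℕ) ≠ 0 → ord m ≠ r := by
    intro m hm he
    apply hm
    have : m = ⟨0, hk⟩ := ord.injective (by rw [he, hord0])
    rw [this]
  -- parent function
  have hpar : ∀ v : V, v ≠ r → ∃! a, G.Adj v a ∧ G.dist r a + 1 = G.dist r v :=
    fun v hv => parent_existsUnique hT hv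
  set par : ∀ v : V, v ≠ r → V := fun v hv => (hpar v hv).exists.choose with hpardef
  have hparspec : ∀ v hv, G.Adj v (par v hv) ∧ G.dist r (par v hv) + 1 = G.dist r v :=
    fun v hv => (hpar v hv).exists.choose_spec
  set π : Fin k → Fin k := fun m =>
    if h : ord m = r then m else ord.symm (par (ord m) h) with hπdef
  have hordπ : ∀ m (h : ord m ≠ r), ord (π m) = par (ord m) h := by
    intro m h
    rw [hπdef]; simp only [dif_neg h, Equiv.apply_symm_apply]
  have hdlt : ∀ m : Fin k, (m:ℕ) ≠ 0 → G.dist r (ord (π m)) < G.dist r (ord m) := by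
    intro m hm
    have h := hne_r m hm
    rw [hordπ m h]
    have := (hparspec (ord m) h).2
    omega
  have hπlt : ∀ m : Fin k, (m:ℕ) ≠ 0 → π m < m := by
    intro m hm
    by_contra hle
    push_neg at hle
    have h2 := hmono hle
    simp only at h2
    have := hdlt m hm
    omega
  refine ⟨ord, π, hπlt, ?_, ?_, ?_⟩
  · intro m hm
    have h := hne_r m hm
    rw [hordπ m h]
    exact (hparspec (ord m) h).1
  · -- surjectivity on edges
    have key : ∀ a b : V, G.Adj a b → G.dist r b = G.dist r a + 1 →
        ∃ m : Fin k, (m:ℕ) ≠ 0 ∧ s(ord m, ord (π m)) = s(a, b) := by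
      intro a b hab hd
      have hbr : b ≠ r := by
        intro h; rw [h, SimpleGraph.dist_self] at hd; omega
      set m := ord.symm b with hm
      have hordm : ord m = b := Equiv.apply_symm_apply _ _
      have hm0 : (m:ℕ) ≠ 0 := by
        intro h0
        apply hbr
        rw [← hordm, ← hord0]
        congr 1
        exact Fin.ext h0
      refine ⟨m, hm0, ?_⟩
      have hordmne : ord m ≠ r := by rw [hordm]; exact hbr
      have hpb := hparspec (ord m) hordmne
      have : par (ord m) hordmne = a := by
        have h2 := (hpar (ord m) hordmne)
        apply h2.unique hpb
        rw [hordm]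
        exact ⟨hab.symm, by omega⟩
      rw [hordπ m hordmne, this, hordm, Sym2.eq_swap]
    intro e he
    rw [SimpleGraph.mem_edgeFinset] at he
    revert he
    refine Sym2.ind (fun a b he => ?_) e
    rw [SimpleGraph.mem_edgeSet] at he
    have hne := adj_dist_ne hT (r := r) he
    have h1 := adj_dist_le hc (r := r) he
    have h2 := adj_dist_le hc (r := r) he.symm
    rcases Nat.lt_or_ge (G.dist r a) (G.dist r b) with hlt | hge
    · exact key a b he (by omega)
    · obtain ⟨m, hm0, hms⟩ := key b a he.symm (by omega)
      exact ⟨m, hm0, by rw [hms, Sym2.eq_swap]⟩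
  · -- injectivity
    intro m m' hm hm' heq
    rw [Sym2.eq_iff] at heq
    rcases heq with ⟨h1, -⟩ | ⟨h1, h2⟩
    · exact ord.injective h1
    · have d1 := hdlt m hm
      have d2 := hdlt m' hm'
      rw [h1, h2] at d1
      omega

end TreeAuxTree

/-- Each tree contributes one: for symmetric nonnegative weights `p_n(i,j)` with
`sup_{i,j} p_n(i,j) ≤ ε_n² → 0`, bounded row sums `∑_j p_n(i,j) ≤ C`, and row sums
converging to `1` in average, the normalized sum over injections
`F : V(T) → {1,…,n}` of `∏_{e ∈ E(T)} p_n(F(x_e), F(y_e))` tends to `1`. -/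
theorem tree_contributes_one {V : Type*} [Fintype V]
    (G : SimpleGraph V) (hT : G.IsTree)
    (p : (n : ℕ) → Fin n → Fin n → ℝ)
    (hsymm : ∀ n i j, p n i j = p n j i)
    (hnonneg : ∀ n i j, 0 ≤ p n i j)
    (ε : ℕ → ℝ) (hε0 : Tendsto ε atTop (nhds 0))
    (hsup : ∀ n i j, p n i j ≤ (ε n) ^ 2)
    (C : ℝ) (hrow : ∀ n i, ∑ j, p n i j ≤ C)
    (havg : Tendsto (fun n => (∑ i, |(∑ j, p n i j) - 1|) / n) atTop (nhds 0)) :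
    Tendsto (fun n =>
        (∑ F ∈ Finset.univ.filter (fun F : V → Fin n => Function.Injective F),
          ∏ e ∈ G.edgeFinset,
            Sym2.lift ⟨fun a b => p n (F a) (F b), fun a b => hsymm n _ _⟩ e) / n)
      atTop (nhds 1) := by
  classical
  set k := Fintype.card V with hkdef
  obtain ⟨ord, π, hπlt, hadj, hsurj, hinj⟩ := TreeAuxTree.tree_order G hT
  have hkpos : 0 < k := @Fintype.card_pos V _ hT.isConnected.nonempty
  set C' := max C 1 with hC'
  have hC1 : (1:ℝ) ≤ C' := le_max_right _ _
  have hrow' : ∀ n i, ∑ j, p n i j ≤ C' := fun n i => le_trans (hrow n i) (le_max_left _ _)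
  have hEq : ∀ n : ℕ,
      (∑ F ∈ Finset.univ.filter (fun F : V → Fin n => Function.Injective F),
          ∏ e ∈ G.edgeFinset,
            Sym2.lift ⟨fun a b => p n (F a) (F b), fun a b => hsymm n _ _⟩ e)
        = ∑ t : Fin k → Fin n, if Function.Injective t then
            ∏ m ∈ univ.filter (fun m : Fin k => (m:ℕ) ≠ 0), p n (t m) (t (π m)) else 0 := by
    intro n
    rw [Finset.sum_filter]
    rw [← Equiv.sum_comp (Equiv.arrowCongr ord (Equiv.refl (Fin n)))]
    apply Finset.sum_congr rfl
    intro t _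
    have hEa : ((Equiv.arrowCongr ord (Equiv.refl (Fin n))) t : V → Fin n) = t ∘ ord.symm := rfl
    have hinj_iff : Function.Injective (Equiv.arrowCongr ord (Equiv.refl (Fin n)) t)
        ↔ Function.Injective t := by
      rw [hEa]
      exact Equiv.injective_comp ord.symm t
    by_cases hI : Function.Injective t
    · rw [if_pos (hinj_iff.mpr hI), if_pos hI]
      refine (Finset.prod_bij (fun m _ => s(ord m, ord (π m))) ?_ ?_ ?_ ?_).symm
      · intro m hm
        rw [SimpleGraph.mem_edgeFinset, SimpleGraph.mem_edgeSet]
        exact hadj m (by simpa using (Finset.mem_filter.mp hm).2)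
      · intro m hm m' hm' h
        exact hinj m m' (by simpa using (Finset.mem_filter.mp hm).2)
          (by simpa using (Finset.mem_filter.mp hm').2) h
      · intro e he
        obtain ⟨m, hm0, hms⟩ := hsurj e he
        exact ⟨m, Finset.mem_filter.mpr ⟨Finset.mem_univ m, by simpa using hm0⟩, hms⟩
      · intro m hm
        rw [hEa]
        simp only [Sym2.lift_mk, Function.comp_apply, Equiv.symm_apply_apply]
    · rw [if_neg (fun h => hI (hinj_iff.mp h)), if_neg hI]
  have hbd : ∀ n : ℕ,
      |(∑ t : Fin k → Fin n, if Function.Injective t then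
          ∏ m ∈ univ.filter (fun m : Fin k => (m:ℕ) ≠ 0), p n (t m) (t (π m)) else 0) - (n:ℝ)|
        ≤ k * C' ^ k * ((∑ i, |(∑ j, p n i j) - 1|) + n * k * (ε n) ^ 2) :=
    fun n => key_bound k (by omega) π hπlt n (p n) (hsymm n) (hnonneg n)
      ((ε n) ^ 2) (sq_nonneg _) (hsup n) C' hC1 (hrow' n)
  have hg0 : Tendsto (fun n : ℕ =>
      (k:ℝ) * C' ^ k * ((∑ i, |(∑ j, p n i j) - 1|) / n + k * (ε n) ^ 2))
      atTop (nhds 0) := by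
    have h4 : Tendsto (fun n => (ε n) ^ 2) atTop (nhds 0) := by
      have := hε0.pow 2
      simpa using this
    have h5 : Tendsto (fun n : ℕ =>
        (∑ i, |(∑ j, p n i j) - 1|) / n + (k:ℝ) * (ε n) ^ 2) atTop (nhds 0) := by
      have := havg.add (h4.const_mul (k:ℝ))
      simpa using this
    have := h5.const_mul ((k:ℝ) * C' ^ k)
    simpa using this
  have hev : ∀ᶠ n : ℕ in atTop,
      ‖(∑ t : Fin k → Fin n, if Function.Injective t then
          ∏ m ∈ univ.filter (fun m : Fin k => (m:ℕ) ≠ 0), p n (t m) (t (π m)) else 0) / n - 1‖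
        ≤ (k:ℝ) * C' ^ k * ((∑ i, |(∑ j, p n i j) - 1|) / n + k * (ε n) ^ 2) := by
    rw [eventually_atTop]
    refine ⟨1, fun n hn => ?_⟩
    have hn0 : (0:ℝ) < n := by exact_mod_cast hn
    set A : ℝ := ∑ t : Fin k → Fin n, if Function.Injective t then
          ∏ m ∈ univ.filter (fun m : Fin k => (m:ℕ) ≠ 0), p n (t m) (t (π m)) else 0 with hA
    rw [Real.norm_eq_abs]
    have h6 : A / n - 1 = (A - n) / n := by field_simp
    rw [h6, abs_div, abs_of_pos hn0]
    calc |A - (n:ℝ)| / n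
        ≤ (k * C' ^ k * ((∑ i, |(∑ j, p n i j) - 1|) + n * k * (ε n) ^ 2)) / n :=
          by gcongr; exact hbd n
      _ = (k:ℝ) * C' ^ k * ((∑ i, |(∑ j, p n i j) - 1|) / n + k * (ε n) ^ 2) := by
          field_simp
  have hf : Tendsto (fun n : ℕ =>
      (∑ t : Fin k → Fin n, if Function.Injective t then
          ∏ m ∈ univ.filter (fun m : Fin k => (m:ℕ) ≠ 0), p n (t m) (t (π m)) else 0) / n - 1)
      atTop (nhds 0) := squeeze_zero_norm' hev hg0
  have hfin := hf.add (tendsto_const_nhds (x := (1:ℝ)))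
  simp only [sub_add_cancel, zero_add] at hfin
  have hfun : (fun n : ℕ =>
      (∑ F ∈ Finset.univ.filter (fun F : V → Fin n => Function.Injective F),
          ∏ e ∈ G.edgeFinset,
            Sym2.lift ⟨fun a b => p n (F a) (F b), fun a b => hsymm n _ _⟩ e) / n)
      = (fun n : ℕ =>
      (∑ t : Fin k → Fin n, if Function.Injective t then
          ∏ m ∈ univ.filter (fun m : Fin k => (m:ℕ) ≠ 0), p n (t m) (t (π m)) else 0) / n) :=
    funext fun n => by rw [hEq n]
  rw [hfun]
  exact hfin
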